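/- arXiv:1801.04462 — 2 statements merged into one kernel-verified Lean document; each statement's English description precedes it below -/
import Mathlib

section
/- Let Y^1, ..., Y^k ∈ {0,1}^n be ρ-correlated uniform binary strings for 0 < ρ < 1 (i.e., Y^i = X + Z^i mod 2 with X uniform and Z^i independent with i.i.d. Bernoulli((1-√ρ)/2) coordinates). Then for any nonnegative functions f_1, ..., f_k on {0,1}^n, E[∏_{i=1}^k f_i(Y^i)] ≤ max_{1≤i≤k} E[∏_{j=1}^k f_i(Y^j)]. -/
open Finset

abbrev Cube (n : ℕ) := Fin n → ZMod 2

noncomputable def EE {n : ℕ} (f : Cube n → ℝ) : ℝ := (∑ x : Cube n, f x) / 2 ^ n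

def W {n : ℕ} (A : Finset (Fin n)) (x : Cube n) : ℝ := (-1 : ℝ) ^ (∑ i ∈ A, (x i).val)

noncomputable def fhat {n : ℕ} (f : Cube n → ℝ) (A : Finset (Fin n)) : ℝ :=
  EE (fun x => f x * W A x)

noncomputable def wt {n : ℕ} (ε : ℝ) (z : Cube n) : ℝ :=
  ∏ i, if z i = 0 then 1 - ε else ε

noncomputable def Tnoise {n : ℕ} (ε : ℝ) (f : Cube n → ℝ) (x : Cube n) : ℝ :=
  ∑ z : Cube n, wt ε z * f (x + z)

/-- Joint expectation E[∏ i, F i (Yⁱ)] where Yⁱ = X + Zⁱ, X uniform on the cube and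
the Zⁱ independent with i.i.d. Bernoulli(ε) coordinates. -/
noncomputable def corrE {n k : ℕ} (ε : ℝ) (F : Fin k → (Cube n → ℝ)) : ℝ :=
  (∑ x : Cube n, ∑ z : Fin k → Cube n, (∏ i, wt ε (z i)) * ∏ i, F i (x + z i)) / 2 ^ n

lemma corrE_eq {n k : ℕ} (ε : ℝ) (F : Fin k → (Cube n → ℝ)) :
    corrE ε F = (∑ x : Cube n, ∏ i, Tnoise ε (F i) x) / 2 ^ n := by
  unfold corrE Tnoise
  congr 1
  refine Finset.sum_congr rfl fun x _ => ?_
  rw [Finset.prod_univ_sum, Fintype.piFinset_univ]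
  exact Finset.sum_congr rfl fun z _ => (Finset.prod_mul_distrib).symm

lemma amgm {k : ℕ} (hk : 0 < k) (g : Fin k → ℝ) (hg : ∀ i, 0 ≤ g i) :
    ∏ i, g i ≤ (1 / k) * ∑ i, g i ^ k := by
  have h := Real.geom_mean_le_arith_mean_weighted Finset.univ
    (fun _ : Fin k => (k : ℝ)⁻¹) (fun i => g i ^ k)
    (fun i _ => by positivity)
    (by simp [Finset.card_univ, mul_inv_cancel₀ (by exact_mod_cast hk.ne' : (k:ℝ) ≠ 0)])
    (fun i _ => pow_nonneg (hg i) k)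
  calc ∏ i, g i = ∏ i, (g i ^ k) ^ ((k : ℝ)⁻¹) := by
        refine Finset.prod_congr rfl fun i _ => ?_
        rw [← Real.rpow_natCast (g i) k, ← Real.rpow_mul (hg i),
          mul_inv_cancel₀ (by exact_mod_cast hk.ne' : (k:ℝ) ≠ 0), Real.rpow_one]
    _ ≤ ∑ i, (k : ℝ)⁻¹ * g i ^ k := h
    _ = (1 / k) * ∑ i, g i ^ k := by rw [Finset.mul_sum]; simp [one_div]

/-- players maximize their correlation by using the same function. -/
theorem corr_le_max_same_function (n k : ℕ) (hk : 0 < k) (ρ ε : ℝ)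
    (hρ₀ : 0 < ρ) (hρ₁ : ρ < 1) (hε : ε = (1 - Real.sqrt ρ) / 2)
    (F : Fin k → (Cube n → ℝ)) (hF : ∀ i x, 0 ≤ F i x) :
    corrE ε F ≤
      Finset.univ.sup' (Finset.univ_nonempty_iff.mpr ⟨⟨0, hk⟩⟩)
        (fun i => corrE ε (fun _ : Fin k => F i)) := by
  have hs : Real.sqrt ρ < 1 := by
    rw [show (1:ℝ) = Real.sqrt 1 by simp]
    exact Real.sqrt_lt_sqrt hρ₀.le hρ₁
  have hε0 : 0 ≤ ε := by rw [hε]; linarith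
  have hε1 : ε ≤ 1 := by
    have := Real.sqrt_nonneg ρ
    rw [hε]; linarith
  have hwt : ∀ z : Cube n, 0 ≤ wt ε z := fun z =>
    Finset.prod_nonneg fun i _ => by split <;> linarith
  have hT : ∀ (i : Fin k) (x : Cube n), 0 ≤ Tnoise ε (F i) x := fun i x =>
    Finset.sum_nonneg fun z _ => mul_nonneg (hwt z) (hF i _)
  set M := Finset.univ.sup' (Finset.univ_nonempty_iff.mpr ⟨⟨0, hk⟩⟩)
      (fun i => corrE ε (fun _ : Fin k => F i)) with hM
  have hkR : (k : ℝ) ≠ 0 := by exact_mod_cast hk.ne'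
  have hconst : ∀ i : Fin k,
      corrE ε (fun _ : Fin k => F i) = (∑ x : Cube n, Tnoise ε (F i) x ^ k) / 2 ^ n := by
    intro i
    rw [corrE_eq]
    simp [Finset.prod_const, Finset.card_univ]
  calc corrE ε F = (∑ x : Cube n, ∏ i, Tnoise ε (F i) x) / 2 ^ n := corrE_eq ε F
    _ ≤ (∑ x : Cube n, (1 / (k:ℝ)) * ∑ i, Tnoise ε (F i) x ^ k) / 2 ^ n := by
        gcongr with x _
        exact amgm hk _ (fun i => hT i x)
    _ = (1 / (k:ℝ)) * ∑ i, corrE ε (fun _ : Fin k => F i) := by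
        rw [← Finset.mul_sum, mul_div_assoc, Finset.sum_comm, Finset.sum_div]
        congr 1
        exact Finset.sum_congr rfl fun i _ => (hconst i).symm
    _ ≤ (1 / (k:ℝ)) * ∑ _i : Fin k, M := by
        gcongr with i _
        exact Finset.le_sup' (fun j => corrE ε (fun _ : Fin k => F j)) (Finset.mem_univ i)
    _ = M := by
        rw [Finset.sum_const, Finset.card_univ, Fintype.card_fin, nsmul_eq_mul]
        field_simp
end

section
/- Let Y^1, Y^2 ∈ {0,1}^n be ρ-correlated uniform binary strings and f: {0,1}^n → {0,1} a balanced Boolean function. Then P(f(Y^1) = f(Y^2)) = 2·E[f(Y^1) f(Y^2)], and this agreement probability is maximized over balanced Boolean functions by the dictator function f(x) = x_1 for every ρ ∈ (0,1). -/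
open Finset

/-- P(f(Y¹) = g(Y²)) for ρ-correlated strings Y¹ = X + Z¹, Y² = X + Z². -/
noncomputable def pAgree2 {n : ℕ} (ε : ℝ) (f g : Cube n → ℝ) : ℝ :=
  (∑ x : Cube n, ∑ z₁ : Cube n, ∑ z₂ : Cube n,
    wt ε z₁ * wt ε z₂ * (if f (x + z₁) = g (x + z₂) then (1:ℝ) else 0)) / 2 ^ n

/-- E[f(Y¹) g(Y²)] for ρ-correlated strings. -/
noncomputable def corr2 {n : ℕ} (ε : ℝ) (f g : Cube n → ℝ) : ℝ :=
  (∑ x : Cube n, ∑ z₁ : Cube n, ∑ z₂ : Cube n,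
    wt ε z₁ * wt ε z₂ * (f (x + z₁) * g (x + z₂))) / 2 ^ n

lemma zmod2_cases (a : ZMod 2) : a = 0 ∨ a = 1 := by revert a; decide
def chi (a : ZMod 2) : ℝ := if a = 0 then 1 else -1
lemma chi_eq (a : ZMod 2) : chi a = (-1 : ℝ) ^ a.val := by
  rcases zmod2_cases a with h | h <;> subst h <;> simp [chi, ZMod.val_one]
lemma chi_add (a b : ZMod 2) : chi (a + b) = chi a * chi b := by
  rcases zmod2_cases a with h | h <;> rcases zmod2_cases b with h' | h' <;>
    subst h <;> subst h' <;> norm_num [chi] <;> rfl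
lemma sum_zmod2 (g : ZMod 2 → ℝ) : ∑ v : ZMod 2, g v = g 0 + g 1 := by
  have h : (univ : Finset (ZMod 2)) = {0, 1} := by decide
  rw [h, Finset.sum_insert (by decide), Finset.sum_singleton]
lemma W_eq_prod {n : ℕ} (A : Finset (Fin n)) (x : Cube n) :
    W A x = ∏ i ∈ A, chi (x i) := by
  simp only [chi_eq, Finset.prod_pow_eq_pow_sum, W]
lemma W_eq_prod_univ {n : ℕ} (A : Finset (Fin n)) (x : Cube n) :
    W A x = ∏ i, (if i ∈ A then chi (x i) else 1) := by
  rw [W_eq_prod, Finset.prod_ite_mem, Finset.univ_inter]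
lemma W_add {n : ℕ} (A : Finset (Fin n)) (x y : Cube n) :
    W A (x + y) = W A x * W A y := by
  simp [W_eq_prod, chi_add, Finset.prod_mul_distrib]
lemma sum_cube_prod {n : ℕ} (g : Fin n → ZMod 2 → ℝ) :
    ∑ z : Cube n, ∏ i, g i (z i) = ∏ i, (g i 0 + g i 1) := by
  have h := Finset.prod_univ_sum (fun _ : Fin n => (univ : Finset (ZMod 2))) g
  rw [Fintype.piFinset_univ] at h
  rw [← h]
  exact Finset.prod_congr rfl fun i _ => sum_zmod2 (g i)

-- new part
lemma sum_shift {n : ℕ} (f : Cube n → ℝ) (z : Cube n) :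
    ∑ x : Cube n, f (x + z) = ∑ x : Cube n, f x :=
  Fintype.sum_equiv (Equiv.addRight z) _ _ (fun _ => rfl)

lemma card_cube (n : ℕ) : Fintype.card (Cube n) = 2 ^ n := by
  simp [Fintype.card_fun]

lemma sum_wt_one {n : ℕ} (ε : ℝ) : ∑ z : Cube n, wt ε z = 1 := by
  unfold wt
  rw [sum_cube_prod (fun _ v => if v = 0 then 1 - ε else ε)]
  norm_num

lemma sum_wt_W {n : ℕ} (ε : ℝ) (A : Finset (Fin n)) :
    ∑ z : Cube n, wt ε z * W A z = (1 - 2 * ε) ^ A.card := by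
  have : ∀ z : Cube n, wt ε z * W A z =
      ∏ i, ((if z i = 0 then 1 - ε else ε) * (if i ∈ A then chi (z i) else 1)) := by
    intro z
    rw [wt, W_eq_prod_univ, ← Finset.prod_mul_distrib]
  rw [Finset.sum_congr rfl fun z _ => this z,
    sum_cube_prod (fun i v => (if v = 0 then 1 - ε else ε) * (if i ∈ A then chi v else 1))]
  have : ∀ i : Fin n,
      ((if (0 : ZMod 2) = 0 then 1 - ε else ε) * (if i ∈ A then chi 0 else 1)
        + (if (1 : ZMod 2) = 0 then 1 - ε else ε) * (if i ∈ A then chi 1 else 1))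
      = if i ∈ A then 1 - 2 * ε else 1 := by
    intro i
    by_cases h : i ∈ A <;> simp [h, chi] <;> ring_nf <;> norm_num [show (1 : ZMod 2) ≠ 0 by decide]
  rw [Finset.prod_congr rfl fun i _ => this i, Finset.prod_ite_mem, Finset.univ_inter,
    Finset.prod_const]

lemma sum_W_mul_W {n : ℕ} (A B : Finset (Fin n)) :
    ∑ x : Cube n, W A x * W B x = if A = B then (2 : ℝ) ^ n else 0 := by
  have : ∀ x : Cube n, W A x * W B x =
      ∏ i, ((if i ∈ A then chi (x i) else 1) * (if i ∈ B then chi (x i) else 1)) := by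
    intro x
    rw [W_eq_prod_univ, W_eq_prod_univ, ← Finset.prod_mul_distrib]
  rw [Finset.sum_congr rfl fun x _ => this x,
    sum_cube_prod (fun i v => (if i ∈ A then chi v else 1) * (if i ∈ B then chi v else 1))]
  by_cases h : A = B
  · subst h
    simp only [if_pos]
    have : ∀ i : Fin n,
        ((if i ∈ A then chi 0 else 1) * (if i ∈ A then chi 0 else 1)
          + (if i ∈ A then chi 1 else 1) * (if i ∈ A then chi 1 else 1)) = 2 := by
      intro i; by_cases hi : i ∈ A <;> simp [hi, chi] <;> norm_num [show (1 : ZMod 2) ≠ 0 by decide]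
    rw [Finset.prod_congr rfl fun i _ => this i, Finset.prod_const, Finset.card_univ,
      Fintype.card_fin]
  · rw [if_neg h]
    obtain ⟨i, hi⟩ : ∃ i, (i ∈ A) ≠ (i ∈ B) := by
      by_contra hc
      push_neg at hc
      exact h (Finset.ext fun i => by
        have := hc i
        constructor <;> intro hm <;> [exact (eq_iff_iff.mp this).mp hm; exact (eq_iff_iff.mp this).mpr hm])
    apply Finset.prod_eq_zero (Finset.mem_univ i)
    rcases Classical.em (i ∈ A) with hA | hA <;> rcases Classical.em (i ∈ B) with hB | hB <;>
      simp [hA, hB, chi] at hi ⊢ <;> norm_num [show (1 : ZMod 2) ≠ 0 by decide]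

lemma EE_W_mul_W {n : ℕ} (A B : Finset (Fin n)) :
    EE (fun x => W A x * W B x) = if A = B then (1 : ℝ) else 0 := by
  rw [EE, sum_W_mul_W]
  by_cases h : A = B <;> simp [h]

lemma sum_A_W {n : ℕ} (z : Cube n) :
    ∑ A : Finset (Fin n), W A z = if z = 0 then (2 : ℝ) ^ n else 0 := by
  have h1 : ∀ A : Finset (Fin n), W A z = (∏ i ∈ A, chi (z i)) * ∏ i ∈ univ \ A, (1 : ℝ) := by
    intro A; rw [W_eq_prod, Finset.prod_const_one, mul_one]
  have h2 := Finset.prod_add (fun i => chi (z i)) (fun _ => (1 : ℝ)) univ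
  rw [Finset.powerset_univ] at h2
  rw [Finset.sum_congr rfl fun A _ => h1 A, ← h2]
  by_cases h : z = 0
  · subst h
    simp [chi]
    norm_num
  · obtain ⟨i, hi⟩ : ∃ i, z i ≠ 0 := by
      by_contra hc; push_neg at hc; exact h (funext hc)
    rw [if_neg h]
    apply Finset.prod_eq_zero (Finset.mem_univ i)
    rcases zmod2_cases (z i) with h' | h'
    · exact absurd h' hi
    · simp [h', chi, show (1 : ZMod 2) ≠ 0 by decide]

lemma fourier_inversion {n : ℕ} (f : Cube n → ℝ) (x : Cube n) :
    f x = ∑ A : Finset (Fin n), fhat f A * W A x := by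
  have key : ∀ A : Finset (Fin n), fhat f A * W A x
      = (∑ y : Cube n, f y * (W A y * W A x)) / 2 ^ n := by
    intro A
    rw [fhat, EE, div_mul_eq_mul_div, Finset.sum_mul]
    congr 1
    exact Finset.sum_congr rfl fun y _ => by ring
  rw [Finset.sum_congr rfl fun A _ => key A, ← Finset.sum_div, Finset.sum_comm]
  have inner : ∀ y : Cube n, (∑ A : Finset (Fin n), f y * (W A y * W A x))
      = f y * (if y = x then (2:ℝ)^n else 0) := by
    intro y
    rw [← Finset.mul_sum]
    congr 1
    have : ∀ A : Finset (Fin n), W A y * W A x = W A (y + x) := fun A => (W_add A y x).symm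
    rw [Finset.sum_congr rfl fun A _ => this A, sum_A_W]
    congr 1
    simp only [eq_iff_iff]
    have hself : ∀ w : Cube n, w + w = 0 := fun w =>
      funext fun i => by rcases zmod2_cases (w i) with h | h <;> simp [h]; decide
    constructor
    · intro hyx
      have h2 : y + x + x = x := by rw [hyx]; exact zero_add x
      rwa [add_assoc, hself, add_zero] at h2
    · intro hyx; rw [hyx, hself]
  rw [Finset.sum_congr rfl fun y _ => inner y]
  simp only [mul_ite, mul_zero]
  rw [Finset.sum_ite_eq' univ x (fun y => f y * (2:ℝ)^n)]
  simp only [Finset.mem_univ, if_pos]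
  field_simp

lemma plancherel {n : ℕ} (f g : Cube n → ℝ) :
    EE (fun x => f x * g x) = ∑ A : Finset (Fin n), fhat f A * fhat g A := by
  have : ∀ x : Cube n, f x * g x = ∑ A : Finset (Fin n), fhat g A * (f x * W A x) := by
    intro x
    calc f x * g x = f x * ∑ A : Finset (Fin n), fhat g A * W A x := by
          rw [← fourier_inversion]
      _ = _ := by rw [Finset.mul_sum]; exact Finset.sum_congr rfl fun A _ => by ring
  rw [EE, Finset.sum_congr rfl fun x _ => this x, Finset.sum_comm, Finset.sum_div]
  apply Finset.sum_congr rfl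
  intro A _
  rw [← Finset.mul_sum, mul_div_assoc]
  rw [show (∑ x : Cube n, f x * W A x) / 2 ^ n = fhat f A from rfl]
  ring

lemma Tnoise_eq {n : ℕ} (ε : ℝ) (f : Cube n → ℝ) (x : Cube n) :
    Tnoise ε f x = ∑ A : Finset (Fin n), (1 - 2*ε) ^ A.card * fhat f A * W A x := by
  unfold Tnoise
  have : ∀ z : Cube n, wt ε z * f (x + z)
      = ∑ A : Finset (Fin n), fhat f A * W A x * (wt ε z * W A z) := by
    intro z
    conv_lhs => rw [fourier_inversion f (x + z)]
    rw [Finset.mul_sum]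
    refine Finset.sum_congr rfl fun A _ => ?_
    rw [W_add]; ring
  rw [Finset.sum_congr rfl fun z _ => this z, Finset.sum_comm]
  refine Finset.sum_congr rfl fun A _ => ?_
  rw [← Finset.mul_sum, sum_wt_W]
  ring

lemma fhat_Tnoise {n : ℕ} (ε : ℝ) (f : Cube n → ℝ) (B : Finset (Fin n)) :
    fhat (Tnoise ε f) B = (1 - 2*ε) ^ B.card * fhat f B := by
  rw [fhat, EE]
  have : ∀ x : Cube n, Tnoise ε f x * W B x
      = ∑ A : Finset (Fin n), (1 - 2*ε) ^ A.card * fhat f A * (W A x * W B x) := by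
    intro x
    rw [Tnoise_eq, Finset.sum_mul]
    exact Finset.sum_congr rfl fun A _ => by ring
  rw [Finset.sum_congr rfl fun x _ => this x, Finset.sum_comm]
  have inner : ∀ A : Finset (Fin n),
      (∑ x : Cube n, (1 - 2*ε) ^ A.card * fhat f A * (W A x * W B x))
      = (1 - 2*ε) ^ A.card * fhat f A * (if A = B then (2:ℝ)^n else 0) := by
    intro A; rw [← Finset.mul_sum, sum_W_mul_W]
  rw [Finset.sum_congr rfl fun A _ => inner A]
  simp only [mul_ite, mul_zero]
  rw [Finset.sum_ite_eq' univ B (fun A => (1 - 2*ε) ^ A.card * fhat f A * (2:ℝ)^n)]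
  simp only [Finset.mem_univ, if_pos]
  field_simp

lemma corr2_eq_EE {n : ℕ} (ε : ℝ) (f g : Cube n → ℝ) :
    corr2 ε f g = EE (fun x => Tnoise ε f x * Tnoise ε g x) := by
  rw [corr2, EE]
  congr 1
  refine Finset.sum_congr rfl fun x _ => ?_
  rw [Tnoise, Tnoise, Finset.sum_mul_sum]
  refine Finset.sum_congr rfl fun z₁ _ => Finset.sum_congr rfl fun z₂ _ => by ring

lemma corr2_eq_sum {n : ℕ} (ε : ℝ) (f : Cube n → ℝ) :
    corr2 ε f f = ∑ A : Finset (Fin n), ((1 - 2*ε)^2) ^ A.card * (fhat f A)^2 := by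
  rw [corr2_eq_EE, plancherel]
  refine Finset.sum_congr rfl fun A _ => ?_
  rw [fhat_Tnoise, ← pow_mul]
  ring

lemma EE_Tnoise {n : ℕ} (ε : ℝ) (f : Cube n → ℝ) :
    EE (Tnoise ε f) = EE f := by
  rw [EE, EE]
  congr 1
  rw [show ∑ x : Cube n, Tnoise ε f x = ∑ x : Cube n, ∑ z : Cube n, wt ε z * f (x + z) from rfl,
    Finset.sum_comm]
  have : ∀ z : Cube n, ∑ x : Cube n, wt ε z * f (x + z) = wt ε z * ∑ x : Cube n, f x := by
    intro z; rw [← Finset.mul_sum, sum_shift]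
  rw [Finset.sum_congr rfl fun z _ => this z, ← Finset.sum_mul, sum_wt_one, one_mul]

lemma pAgree2_eq {n : ℕ} (ε : ℝ) (f : Cube n → ℝ) (hf : ∀ x, f x = 0 ∨ f x = 1) :
    pAgree2 ε f f = EE (fun x => 1 - 2 * Tnoise ε f x + 2 * (Tnoise ε f x * Tnoise ε f x)) := by
  rw [pAgree2, EE]
  congr 1
  refine Finset.sum_congr rfl fun x _ => ?_
  have key : ∀ z₁ z₂ : Cube n,
      wt ε z₁ * wt ε z₂ * (if f (x + z₁) = f (x + z₂) then (1:ℝ) else 0)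
      = wt ε z₁ * wt ε z₂ - (wt ε z₁ * f (x + z₁)) * wt ε z₂
        - wt ε z₁ * (wt ε z₂ * f (x + z₂))
        + 2 * ((wt ε z₁ * f (x + z₁)) * (wt ε z₂ * f (x + z₂))) := by
    intro z₁ z₂
    rcases hf (x + z₁) with h1 | h1 <;> rcases hf (x + z₂) with h2 | h2 <;>
      rw [h1, h2] <;> norm_num <;> ring
  rw [Finset.sum_congr rfl fun z₁ _ => Finset.sum_congr rfl fun z₂ _ => key z₁ z₂]
  simp only [Finset.sum_add_distrib, Finset.sum_sub_distrib, ← Finset.sum_mul, ← Finset.mul_sum]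
  rw [sum_wt_one]
  have hT : ∑ z : Cube n, wt ε z * f (x + z) = Tnoise ε f x := rfl
  rw [hT]
  ring

lemma W_empty {n : ℕ} (x : Cube n) : W ∅ x = 1 := by simp [W]

lemma fhat_empty {n : ℕ} (f : Cube n → ℝ) : fhat f ∅ = EE f := by
  simp [fhat, W_empty]

lemma EE_const {n : ℕ} (c : ℝ) : EE (fun _ : Cube n => c) = c := by
  rw [EE, Finset.sum_const, Finset.card_univ, card_cube, nsmul_eq_mul]
  push_cast
  field_simp

lemma EE_comb {n : ℕ} (g h : Cube n → ℝ) (a b c : ℝ) :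
    EE (fun x => c + a * g x + b * h x) = c + a * EE g + b * EE h := by
  unfold EE
  rw [Finset.sum_add_distrib, Finset.sum_add_distrib, ← Finset.mul_sum, ← Finset.mul_sum,
    Finset.sum_const, Finset.card_univ, card_cube, nsmul_eq_mul]
  push_cast
  field_simp

lemma parseval_bool {n : ℕ} (f : Cube n → ℝ) (hf : ∀ x, f x = 0 ∨ f x = 1) :
    ∑ A : Finset (Fin n), (fhat f A)^2 = EE f := by
  have : (fun x => f x * f x) = f := funext fun x => by rcases hf x with h | h <;> rw [h] <;> ring
  have hp := plancherel f f
  rw [this] at hp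
  rw [hp]
  exact Finset.sum_congr rfl fun A _ => (sq (fhat f A))

section Dict
variable {n : ℕ} (i0 : Fin n)

lemma dict_eq (y : Cube n) :
    (if y i0 = 1 then (1:ℝ) else 0) = (1 - W {i0} y) / 2 := by
  rw [W_eq_prod, Finset.prod_singleton]
  rcases zmod2_cases (y i0) with h | h <;>
    simp [h, chi, show (1 : ZMod 2) ≠ 0 by decide] <;> norm_num

lemma fhat_dict (A : Finset (Fin n)) :
    fhat (fun y : Cube n => if y i0 = 1 then (1:ℝ) else 0) A
      = ((if A = ∅ then (1:ℝ) else 0) - (if A = {i0} then (1:ℝ) else 0)) / 2 := by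
  rw [fhat]
  have : (fun x : Cube n => (if x i0 = 1 then (1:ℝ) else 0) * W A x)
      = fun x => (W ∅ x * W A x - W {i0} x * W A x) / 2 := by
    funext x
    rw [dict_eq, W_empty]
    ring
  rw [this]
  have hEE : ∀ g h : Cube n → ℝ, EE (fun x => (g x - h x) / 2) = (EE g - EE h) / 2 := by
    intro g h
    unfold EE
    rw [← Finset.sum_div, Finset.sum_sub_distrib]
    have h2n : (2:ℝ)^n ≠ 0 := by positivity
    field_simp
  rw [hEE, EE_W_mul_W, EE_W_mul_W]
  congr 2 <;> simp [eq_comm]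

lemma EE_dict (hn : (0:ℕ) < n) :
    EE (fun y : Cube n => if y i0 = 1 then (1:ℝ) else 0) = 1/2 := by
  rw [← fhat_empty, fhat_dict]
  have : (∅ : Finset (Fin n)) ≠ {i0} := by
    intro h
    exact absurd (h ▸ Finset.mem_singleton_self i0) (Finset.notMem_empty i0)
  simp [this]

lemma corr2_dict (ε : ℝ) :
    corr2 ε (fun y : Cube n => if y i0 = 1 then (1:ℝ) else 0)
      (fun y : Cube n => if y i0 = 1 then (1:ℝ) else 0)
      = 1/4 + (1 - 2*ε)^2 / 4 := by
  rw [corr2_eq_sum]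
  have hne : ∀ A : Finset (Fin n), A = ∅ → A = {i0} → False := by
    intro A h1 h2
    rw [h1] at h2
    exact absurd (h2 ▸ Finset.mem_singleton_self i0) (Finset.notMem_empty i0)
  have : ∀ A : Finset (Fin n), ((1 - 2*ε)^2) ^ A.card *
      (fhat (fun y : Cube n => if y i0 = 1 then (1:ℝ) else 0) A)^2
      = (if A = ∅ then (1:ℝ)/4 else 0) + (if A = {i0} then (1 - 2*ε)^2/4 else 0) := by
    intro A
    rw [fhat_dict]
    by_cases h1 : A = ∅
    · have h2 : (∅ : Finset (Fin n)) ≠ {i0} := fun h2 => hne ∅ rfl h2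
      simp [h1, h2]
      norm_num
    · by_cases h2 : A = {i0}
      · have h1' : ({i0} : Finset (Fin n)) ≠ ∅ := fun h => hne {i0} h rfl
        simp [h1, h2, h1']
        ring
      · simp [h1, h2]
  rw [Finset.sum_congr rfl fun A _ => this A, Finset.sum_add_distrib,
    Finset.sum_ite_eq' univ (∅ : Finset (Fin n)) (fun _ => (1:ℝ)/4),
    Finset.sum_ite_eq' univ ({i0} : Finset (Fin n)) (fun _ => (1 - 2*ε)^2/4)]
  simp

end Dict

lemma corr2_le {n : ℕ} (ε q : ℝ) (hq : q = (1 - 2*ε)^2) (hq0 : 0 ≤ q) (hq1 : q ≤ 1)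
    (f : Cube n → ℝ) (hf : ∀ x, f x = 0 ∨ f x = 1) (hbal : EE f = 1/2) :
    corr2 ε f f ≤ 1/4 + q/4 := by
  rw [corr2_eq_sum, ← hq]
  rw [← Finset.add_sum_erase _ _ (Finset.mem_univ (∅ : Finset (Fin n)))]
  have h0 : q ^ (∅ : Finset (Fin n)).card * (fhat f ∅)^2 = 1/4 := by
    rw [Finset.card_empty, pow_zero, one_mul, fhat_empty, hbal]
    norm_num
  rw [h0]
  have hrest : ∑ A ∈ (univ : Finset (Finset (Fin n))).erase ∅, q ^ A.card * (fhat f A)^2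
      ≤ q * ∑ A ∈ (univ : Finset (Finset (Fin n))).erase ∅, (fhat f A)^2 := by
    rw [Finset.mul_sum]
    apply Finset.sum_le_sum
    intro A hA
    have hA0 : A ≠ ∅ := (Finset.mem_erase.mp hA).1
    have hcard : 1 ≤ A.card := Finset.card_pos.mpr (Finset.nonempty_of_ne_empty hA0)
    have : q ^ A.card ≤ q ^ 1 := pow_le_pow_of_le_one hq0 hq1 hcard
    rw [pow_one] at this
    exact mul_le_mul_of_nonneg_right this (sq_nonneg _)
  have hsum : ∑ A ∈ (univ : Finset (Finset (Fin n))).erase ∅, (fhat f A)^2 = 1/4 := by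
    rw [Finset.sum_erase_eq_sub (Finset.mem_univ _), parseval_bool f hf, hbal, fhat_empty, hbal]
    norm_num
  rw [hsum] at hrest
  linarith


/-- for balanced Boolean f, P(f(Y¹)=f(Y²)) = 2·E[f(Y¹)f(Y²)], and the
agreement probability is maximized by the dictator function. -/
theorem agreement_two_players (n : ℕ) (hn : 0 < n) (ρ ε : ℝ)
    (hρ₀ : 0 < ρ) (hρ₁ : ρ < 1) (hε : ε = (1 - Real.sqrt ρ) / 2) :
    (∀ f : Cube n → ℝ, (∀ x, f x = 0 ∨ f x = 1) → EE f = 1/2 →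
      pAgree2 ε f f = 2 * corr2 ε f f) ∧
    (∀ f : Cube n → ℝ, (∀ x, f x = 0 ∨ f x = 1) → EE f = 1/2 →
      pAgree2 ε f f ≤
        pAgree2 ε (fun y : Cube n => if y ⟨0, hn⟩ = 1 then (1:ℝ) else 0)
          (fun y : Cube n => if y ⟨0, hn⟩ = 1 then (1:ℝ) else 0)) := by
  have part1 : ∀ f : Cube n → ℝ, (∀ x, f x = 0 ∨ f x = 1) → EE f = 1/2 →
      pAgree2 ε f f = 2 * corr2 ε f f := by
    intro f hf hbal
    rw [pAgree2_eq ε f hf, corr2_eq_EE]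
    have heq : (fun x => 1 - 2 * Tnoise ε f x + 2 * (Tnoise ε f x * Tnoise ε f x))
        = fun x : Cube n => (1:ℝ) + (-2) * Tnoise ε f x
            + 2 * ((fun y => Tnoise ε f y * Tnoise ε f y) x) := funext fun x => by ring
    rw [heq, EE_comb (Tnoise ε f) (fun y => Tnoise ε f y * Tnoise ε f y) (-2) 2 1,
      EE_Tnoise, hbal]
    ring
  refine ⟨part1, ?_⟩
  intro f hf hbal
  have hsq : 1 - 2 * ε = Real.sqrt ρ := by rw [hε]; ring
  have hqρ : (1 - 2*ε)^2 = ρ := by rw [hsq, Real.sq_sqrt hρ₀.le]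
  have hd_bool : ∀ x : Cube n, (if x ⟨0, hn⟩ = 1 then (1:ℝ) else 0) = 0 ∨
      (if x ⟨0, hn⟩ = 1 then (1:ℝ) else 0) = 1 := by
    intro x; by_cases h : x ⟨0, hn⟩ = 1 <;> simp [h]
  have hd_bal : EE (fun y : Cube n => if y ⟨0, hn⟩ = 1 then (1:ℝ) else 0) = 1/2 :=
    EE_dict ⟨0, hn⟩ hn
  rw [part1 f hf hbal, part1 _ hd_bool hd_bal, corr2_dict]
  have hb := corr2_le ε ρ hqρ.symm hρ₀.le hρ₁.le f hf hbal
  rw [hqρ]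
  linarith
end
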